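/- Let n ≥ 2 and let G be a simple graph on Fin n. Then G has a nontrivial automorphism (a graph isomorphism G ≃g G other than the identity) if and only if there exists a permutation σ ≠ 1 of Fin n such that M_σ '' S(G) = S(G), where S(G) = {s i : i ∈ Fin n} ∪ {(s i + s j)/2 : G.Adj i j} is the point-set form of G built from the centered standard simplex vertices s. -/

import Mathlib

/-- The centered standard simplex vertices: `s i = e_i - (1/n) • ∑ j, e_j`,
where `e_i` is the standard basis of `EuclideanSpace ℝ (Fin n)`. -/
noncomputable def simplexPt (n : ℕ) (i : Fin n) : EuclideanSpace ℝ (Fin n) :=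
  EuclideanSpace.single i (1 : ℝ) - ((1 : ℝ) / n) • ∑ j, EuclideanSpace.single j (1 : ℝ)

/-- The coordinate-permutation map `M_σ` (the permutation matrix of `σ`), as a linear
isometry equivalence of `EuclideanSpace ℝ (Fin n)`. -/
noncomputable def Mperm (n : ℕ) (σ : Equiv.Perm (Fin n)) :
    EuclideanSpace ℝ (Fin n) ≃ₗᵢ[ℝ] EuclideanSpace ℝ (Fin n) :=
  LinearIsometryEquiv.piLpCongrLeft 2 ℝ ℝ σ

/-- The point-set form of a simple graph `G` on `Fin n`:
`S(G) = {s i : i} ∪ {(s i + s j)/2 : G.Adj i j}`. -/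
noncomputable def pointSet (n : ℕ) (G : SimpleGraph (Fin n)) :
    Set (EuclideanSpace ℝ (Fin n)) :=
  Set.range (simplexPt n) ∪
    {p | ∃ i j : Fin n, G.Adj i j ∧ p = (2 : ℝ)⁻¹ • (simplexPt n i + simplexPt n j)}

lemma simplexPt_apply (n : ℕ) (i k : Fin n) :
    (simplexPt n i : EuclideanSpace ℝ (Fin n)) k = (if k = i then 1 else 0) - 1/n := by
  have : (∑ j, EuclideanSpace.single j (1:ℝ)) k = ∑ j : Fin n, (EuclideanSpace.single j (1:ℝ)) k :=
    by rw [WithLp.ofLp_sum]; exact Finset.sum_apply k Finset.univ _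
  simp [simplexPt, EuclideanSpace.single_apply, this]

lemma Mperm_apply (n : ℕ) (σ : Equiv.Perm (Fin n)) (x : EuclideanSpace ℝ (Fin n)) (k : Fin n) :
    Mperm n σ x k = x (σ.symm k) := by
  simp [Mperm, LinearIsometryEquiv.piLpCongrLeft_apply, Equiv.piCongrLeft'_apply]

lemma Mperm_simplexPt (n : ℕ) (σ : Equiv.Perm (Fin n)) (i : Fin n) :
    Mperm n σ (simplexPt n i) = simplexPt n (σ i) := by
  ext k
  rw [Mperm_apply, simplexPt_apply, simplexPt_apply]
  congr 1
  simp [Equiv.eq_symm_apply, eq_comm]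

lemma mid_apply (n : ℕ) (i j k : Fin n) :
    ((2 : ℝ)⁻¹ • (simplexPt n i + simplexPt n j) : EuclideanSpace ℝ (Fin n)) k
      = (2:ℝ)⁻¹ * ((if k = i then 1 else 0) + (if k = j then 1 else 0)) - 1/n := by
  have : ((2 : ℝ)⁻¹ • (simplexPt n i + simplexPt n j) : EuclideanSpace ℝ (Fin n)) k
      = (2:ℝ)⁻¹ * (simplexPt n i k + simplexPt n j k) := rfl
  rw [this, simplexPt_apply, simplexPt_apply]
  ring

lemma simplexPt_injective (n : ℕ) : Function.Injective (simplexPt n) := by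
  intro i j h
  have : simplexPt n i i = simplexPt n j i := by rw [h]
  rw [simplexPt_apply, simplexPt_apply] at this
  by_contra hij
  simp [hij] at this

lemma mid_ne_vertex (n : ℕ) (i j m : Fin n) (hij : i ≠ j) :
    ((2 : ℝ)⁻¹ • (simplexPt n i + simplexPt n j) : EuclideanSpace ℝ (Fin n)) ≠ simplexPt n m := by
  intro h
  have hc : ((2 : ℝ)⁻¹ • (simplexPt n i + simplexPt n j) : EuclideanSpace ℝ (Fin n)) m
      = simplexPt n m m := by rw [h]
  rw [mid_apply, simplexPt_apply, if_pos rfl] at hc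
  rcases eq_or_ne m i with rfl | hmi
  · rw [if_pos rfl, if_neg hij] at hc; linarith
  · rw [if_neg hmi] at hc
    rcases eq_or_ne m j with rfl | hmj
    · rw [if_pos rfl] at hc; linarith
    · rw [if_neg hmj] at hc; linarith

lemma mid_eq (n : ℕ) (i j i' j' : Fin n) (hij : i ≠ j) (hij' : i' ≠ j')
    (h : ((2 : ℝ)⁻¹ • (simplexPt n i + simplexPt n j) : EuclideanSpace ℝ (Fin n))
      = (2 : ℝ)⁻¹ • (simplexPt n i' + simplexPt n j')) :
    (i = i' ∧ j = j') ∨ (i = j' ∧ j = i') := by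
  have key : ∀ k : Fin n, (k = i ∨ k = j) → (k = i' ∨ k = j') := by
    intro k hk
    have hc : ((2 : ℝ)⁻¹ • (simplexPt n i + simplexPt n j) : EuclideanSpace ℝ (Fin n)) k
        = ((2 : ℝ)⁻¹ • (simplexPt n i' + simplexPt n j') : EuclideanSpace ℝ (Fin n)) k := by
      rw [h]
    rw [mid_apply, mid_apply] at hc
    by_contra hne
    push_neg at hne
    rw [if_neg hne.1, if_neg hne.2] at hc
    rcases hk with rfl | rfl
    · rw [if_pos rfl, if_neg hij] at hc; linarith
    · rw [if_neg (fun h => hij h.symm), if_pos rfl] at hc; linarith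
  rcases key i (Or.inl rfl) with rfl | rfl
  · rcases key j (Or.inr rfl) with rfl | rfl
    · exact absurd rfl hij
    · exact Or.inl ⟨rfl, rfl⟩
  · rcases key j (Or.inr rfl) with rfl | rfl
    · exact Or.inr ⟨rfl, rfl⟩
    · exact absurd rfl hij

lemma Mperm_mid (n : ℕ) (σ : Equiv.Perm (Fin n)) (i j : Fin n) :
    Mperm n σ ((2 : ℝ)⁻¹ • (simplexPt n i + simplexPt n j))
      = (2 : ℝ)⁻¹ • (simplexPt n (σ i) + simplexPt n (σ j)) := by
  rw [map_smul, map_add, Mperm_simplexPt, Mperm_simplexPt]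

lemma image_eq_of_aut (n : ℕ) (G : SimpleGraph (Fin n)) (σ : Equiv.Perm (Fin n))
    (h : ∀ i j, G.Adj i j ↔ G.Adj (σ i) (σ j)) :
    Mperm n σ '' pointSet n G = pointSet n G := by
  apply Set.Subset.antisymm
  · rintro _ ⟨p, hp, rfl⟩
    rcases hp with ⟨i, rfl⟩ | ⟨i, j, hij, rfl⟩
    · exact Or.inl ⟨σ i, (Mperm_simplexPt n σ i).symm⟩
    · exact Or.inr ⟨σ i, σ j, (h i j).mp hij, Mperm_mid n σ i j⟩
  · rintro p (⟨i, rfl⟩ | ⟨i, j, hij, rfl⟩)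
    · exact ⟨simplexPt n (σ.symm i), Or.inl ⟨σ.symm i, rfl⟩,
        by rw [Mperm_simplexPt, Equiv.apply_symm_apply]⟩
    · refine ⟨(2 : ℝ)⁻¹ • (simplexPt n (σ.symm i) + simplexPt n (σ.symm j)),
        Or.inr ⟨σ.symm i, σ.symm j, ?_, rfl⟩,
        by rw [Mperm_mid, Equiv.apply_symm_apply, Equiv.apply_symm_apply]⟩
      rw [h]
      simpa using hij

lemma aut_of_image_subset (n : ℕ) (G : SimpleGraph (Fin n)) (σ : Equiv.Perm (Fin n))
    (h : Mperm n σ '' pointSet n G ⊆ pointSet n G) :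
    ∀ i j, G.Adj i j → G.Adj (σ i) (σ j) := by
  intro i j hij
  have hmem : Mperm n σ ((2 : ℝ)⁻¹ • (simplexPt n i + simplexPt n j)) ∈ pointSet n G :=
    h ⟨_, Or.inr ⟨i, j, hij, rfl⟩, rfl⟩
  rw [Mperm_mid] at hmem
  have hσij : σ i ≠ σ j := fun hh => hij.ne (σ.injective hh)
  rcases hmem with ⟨m, hm⟩ | ⟨i', j', hij', heq⟩
  · exact absurd hm.symm (mid_ne_vertex n _ _ m hσij)
  · rcases mid_eq n (σ i) (σ j) i' j' hσij hij'.ne heq with ⟨rfl, rfl⟩ | ⟨rfl, rfl⟩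
    · exact hij'
    · exact hij'.symm

theorem nontrivial_automorphism_iff_nontrivial_symmetry
    (n : ℕ) (hn : 2 ≤ n) (G : SimpleGraph (Fin n)) :
    (∃ f : G ≃g G, f ≠ (SimpleGraph.Iso.refl : G ≃g G)) ↔
      ∃ σ : Equiv.Perm (Fin n), σ ≠ 1 ∧ Mperm n σ '' pointSet n G = pointSet n G := by
  constructor
  · rintro ⟨f, hf⟩
    refine ⟨f.toEquiv, ?_, image_eq_of_aut n G f.toEquiv fun i j =>
      (f.map_rel_iff (a := i) (b := j)).symm⟩
    intro h1
    apply hf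
    apply RelIso.ext
    intro x
    have := congr_arg (fun e => e x) h1
    simpa using this
  · rintro ⟨σ, hσ, himg⟩
    have h1 : ∀ i j, G.Adj i j → G.Adj (σ i) (σ j) :=
      aut_of_image_subset n G σ himg.le
    have hsymm : Mperm n σ⁻¹ = (Mperm n σ).symm := by
      rw [Mperm, Mperm, LinearIsometryEquiv.piLpCongrLeft_symm]; rfl
    have himg' : Mperm n σ⁻¹ '' pointSet n G ⊆ pointSet n G := by
      have heq : Mperm n σ⁻¹ '' pointSet n G
          = (Mperm n σ).symm '' (Mperm n σ '' pointSet n G) := by rw [himg, hsymm]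
      rw [heq, Set.image_image]
      simp
    have h2 : ∀ i j, G.Adj i j → G.Adj (σ⁻¹ i) (σ⁻¹ j) :=
      aut_of_image_subset n G σ⁻¹ himg'
    refine ⟨⟨σ, ?_⟩, ?_⟩
    · intro a b
      constructor
      · intro h
        have := h2 _ _ h
        simpa using this
      · exact h1 a b
    · intro heq
      apply hσ
      refine Equiv.ext fun x => ?_
      have := congr_arg (fun (g : G ≃g G) => g x) heq
      simpa using this
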